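/- There exists a constant C > 0, depending only on q, such that for all n ∈ ½ℤ₊ with n ≥ 1/2, all half-integers i ∈ {−n, …, n} and j ∈ {−n+1/2, …, n−1/2}, every entry of the 2×2 matrix b⁺_{nij} − q^{n+j−1/2}(1−q^{2n+2i+2})^{1/2} · diag(q(1−q^{2n−2j+3})^{1/2}, (1−q^{2n−2j+1})^{1/2}) has absolute value at most C·q^{2n}. -/

import Mathlib

noncomputable section

open Real

/-- The q-number `[m] = (q^m - q^(-m))/(q - q⁻¹)`. -/
def qnum (q m : ℝ) : ℝ := (q ^ m - q ^ (-m)) / (q - q⁻¹)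

/-- The 2×2 matrix `a⁺_{nij}`. -/
def aP (q n i j : ℝ) : Matrix (Fin 2) (Fin 2) ℝ :=
  (q ^ ((i + j - 1/2) / 2) * Real.sqrt (qnum q (n + i + 1))) •
    !![q ^ (-n - 1/2) * Real.sqrt (qnum q (n + j + 3/2)) / qnum q (2*n + 2), 0;
       q ^ ((1:ℝ)/2) * Real.sqrt (qnum q (n - j + 1/2)) / (qnum q (2*n + 1) * qnum q (2*n + 2)),
       q ^ (-n) * Real.sqrt (qnum q (n + j + 1/2)) / qnum q (2*n + 1)]

/-- The 2×2 matrix `a⁻_{nij}`. -/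
def aM (q n i j : ℝ) : Matrix (Fin 2) (Fin 2) ℝ :=
  (q ^ ((i + j - 1/2) / 2) * Real.sqrt (qnum q (n - i))) •
    !![q ^ (n + 1) * Real.sqrt (qnum q (n - j + 1/2)) / qnum q (2*n + 1),
       -(q ^ ((1:ℝ)/2) * Real.sqrt (qnum q (n + j + 1/2)) / (qnum q (2*n) * qnum q (2*n + 1)));
       0, q ^ (n + 1/2) * Real.sqrt (qnum q (n - j - 1/2)) / qnum q (2*n)]

/-- The 2×2 matrix `b⁺_{nij}`. -/
def bP (q n i j : ℝ) : Matrix (Fin 2) (Fin 2) ℝ :=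
  (q ^ ((i + j - 1/2) / 2) * Real.sqrt (qnum q (n + i + 1))) •
    !![Real.sqrt (qnum q (n - j + 3/2)) / qnum q (2*n + 2), 0;
       -(q ^ (-n - 1) * Real.sqrt (qnum q (n + j + 1/2)) / (qnum q (2*n + 1) * qnum q (2*n + 2))),
       q ^ (-(1:ℝ)/2) * Real.sqrt (qnum q (n - j + 1/2)) / qnum q (2*n + 1)]

/-- The 2×2 matrix `b⁻_{nij}`. -/
def bM (q n i j : ℝ) : Matrix (Fin 2) (Fin 2) ℝ :=
  (q ^ ((i + j - 1/2) / 2) * Real.sqrt (qnum q (n - i))) •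
    !![-(q ^ (-(1:ℝ)/2) * Real.sqrt (qnum q (n + j + 1/2)) / qnum q (2*n + 1)),
       -(q ^ n * Real.sqrt (qnum q (n - j + 1/2)) / (qnum q (2*n) * qnum q (2*n + 1)));
       0, -(Real.sqrt (qnum q (n + j - 1/2)) / qnum q (2*n))]

/-- `n` is a nonnegative half-integer: `n ∈ ½ℤ₊ = {0, 1/2, 1, 3/2, …}`. -/
def HalfNat (n : ℝ) : Prop := ∃ N : ℕ, (N : ℝ) = 2 * n

/-- `i ∈ {-n, -n+1, …, n}`. -/
def IdxRange (n i : ℝ) : Prop := (∃ k : ℕ, (k : ℝ) = i + n) ∧ i ≤ n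

/-- `j ∈ {-n+1/2, -n+3/2, …, n-1/2}`. -/
def JRangeIn (n j : ℝ) : Prop := (∃ k : ℕ, (k : ℝ) = j + n - 1/2) ∧ j ≤ n - 1/2

/-- `j ∈ {-n-1/2, -n+1/2, …, n+1/2}`. -/
def JRangeOut (n j : ℝ) : Prop := (∃ k : ℕ, (k : ℝ) = j + n + 1/2) ∧ j ≤ n + 1/2

variable {q : ℝ}

lemma qnum_eq (hq0 : 0 < q) (hq1 : q < 1) (m : ℝ) :
    qnum q m = q ^ (1 - m) * (1 - q ^ (2*m)) / (1 - q ^ 2) := by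
  have hqne : q ≠ 0 := hq0.ne'
  have hx : (0:ℝ) < q ^ m := Real.rpow_pos_of_pos hq0 m
  have h2m : q ^ (2*m) = q ^ m * q ^ m := by rw [two_mul, Real.rpow_add hq0]
  have h1m : q ^ (1 - m) = q / q ^ m := by rw [Real.rpow_sub hq0, Real.rpow_one]
  have hd : q - q⁻¹ ≠ 0 := by
    have h : (1:ℝ) < q⁻¹ := (one_lt_inv₀ hq0).mpr hq1
    intro h'; nlinarith
  have hq2 : 1 - q^2 ≠ 0 := by nlinarith
  unfold qnum
  rw [Real.rpow_neg hq0.le, h2m, h1m, div_eq_div_iff hd (by exact hq2)]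
  field_simp
  ring
lemma qnum_eq' (hq0 : 0 < q) (hq1 : q < 1) (m : ℝ) :
    qnum q m = q ^ (1 - m) * (1 - q ^ (2*m)) /
      (Real.sqrt (1 - q ^ 2) * Real.sqrt (1 - q ^ 2)) := by
  have hc : (0:ℝ) < 1 - q ^ 2 := by nlinarith
  rw [qnum_eq hq0 hq1, Real.mul_self_sqrt hc.le]
lemma sqrt_qnum (hq0 : 0 < q) (hq1 : q < 1) (m : ℝ) (hm : 0 ≤ m) :
    Real.sqrt (qnum q m) =
      q ^ ((1-m)/2) * Real.sqrt (1 - q ^ (2*m)) / Real.sqrt (1 - q ^ 2) := by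
  have h1 : (0:ℝ) ≤ 1 - q ^ (2*m) := by
    have := Real.rpow_le_one hq0.le hq1.le (by linarith : (0:ℝ) ≤ 2*m)
    linarith
  have hc : (0:ℝ) < 1 - q ^ 2 := by nlinarith
  rw [qnum_eq hq0 hq1 m,
    show q ^ (1-m) = (q ^ ((1-m)/2))^2 by
      rw [← Real.rpow_natCast (q ^ ((1-m)/2)) 2, ← Real.rpow_mul hq0.le]; norm_num,
    Real.sqrt_div (by positivity), Real.sqrt_mul (sq_nonneg _), Real.sqrt_sq (by positivity)]

set_option maxHeartbeats 2000000 in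
/-- There is `C > 0` depending only on `q` such that for all `n ∈ ½ℤ₊` with
`n ≥ 1/2`, `i ∈ {-n,…,n}`, `j ∈ {-n+1/2,…,n-1/2}`, every entry of
`b⁺_{nij} - q^(n+j-1/2) (1-q^(2n+2i+2))^(1/2) diag(q(1-q^(2n-2j+3))^(1/2), (1-q^(2n-2j+1))^(1/2))`
has absolute value at most `C·q^(2n)`. -/
theorem bPlus_asymptotics (q : ℝ) (hq0 : 0 < q) (hq1 : q < 1) :
    ∃ C : ℝ, 0 < C ∧ ∀ n i j : ℝ, HalfNat n → 1/2 ≤ n → IdxRange n i → JRangeIn n j →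
      ∀ r s : Fin 2,
        |(bP q n i j - (q ^ (n + j - 1/2) * Real.sqrt (1 - q ^ (2*n + 2*i + 2))) •
            !![q * Real.sqrt (1 - q ^ (2*n - 2*j + 3)), 0;
               0, Real.sqrt (1 - q ^ (2*n - 2*j + 1))]) r s|
          ≤ C * q ^ (2 * n) := by
  have hc : (0:ℝ) < 1 - q ^ 2 := by nlinarith
  refine ⟨(1 - q ^ 2)⁻¹, by positivity, ?_⟩
  intro n i j _ hn hi hj r s
  obtain ⟨⟨ki, hki⟩, hi2⟩ := hi
  obtain ⟨⟨kj, hkj⟩, hj2⟩ := hj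
  have hi0 : 0 ≤ i + n := by rw [← hki]; positivity
  have hj0 : 0 ≤ j + n - 1/2 := by rw [← hkj]; positivity
  have hsc : √(1 - q ^ 2) ≠ 0 := by positivity
  have hqe : ∀ x : ℝ, q ^ x ≠ 0 := fun x => (Real.rpow_pos_of_pos hq0 x).ne'
  have hqpos : ∀ x : ℝ, 0 < q ^ x := fun x => Real.rpow_pos_of_pos hq0 x
  have hQ1 : (0:ℝ) < 1 - q ^ (4*n+2) := by
    have : q ^ (4*n+2) < 1 := Real.rpow_lt_one hq0.le hq1 (by linarith)
    linarith
  have hQ2 : (0:ℝ) < 1 - q ^ (4*n+4) := by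
    have : q ^ (4*n+4) < 1 := Real.rpow_lt_one hq0.le hq1 (by linarith)
    linarith
  have hcQ1 : 1 - q ^ 2 ≤ 1 - q ^ (4*n+2) := by
    have : q ^ (4*n+2) ≤ q ^ ((2:ℕ):ℝ) :=
      Real.rpow_le_rpow_of_exponent_ge hq0 hq1.le (by push_cast; linarith)
    rw [Real.rpow_natCast] at this
    linarith
  have hcQ2 : 1 - q ^ 2 ≤ 1 - q ^ (4*n+4) := by
    have : q ^ (4*n+4) ≤ q ^ ((2:ℕ):ℝ) :=
      Real.rpow_le_rpow_of_exponent_ge hq0 hq1.le (by push_cast; linarith)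
    rw [Real.rpow_natCast] at this
    linarith
  have hle1 : ∀ x : ℝ, 0 ≤ x → q ^ x ≤ 1 := fun x hx => Real.rpow_le_one hq0.le hq1.le hx
  have hs1 : √(1 - q ^ (2*n+2*i+2)) ≤ 1 :=
    Real.sqrt_le_one.mpr (by linarith [(hqpos (2*n+2*i+2)).le])
  have hs2 : √(1 - q ^ (2*n-2*j+3)) ≤ 1 :=
    Real.sqrt_le_one.mpr (by linarith [(hqpos (2*n-2*j+3)).le])
  have hs3 : √(1 - q ^ (2*n-2*j+1)) ≤ 1 :=
    Real.sqrt_le_one.mpr (by linarith [(hqpos (2*n-2*j+1)).le])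
  have hs4 : √(1 - q ^ (2*n+2*j+1)) ≤ 1 :=
    Real.sqrt_le_one.mpr (by linarith [(hqpos (2*n+2*j+1)).le])
  fin_cases r <;> fin_cases s <;>
    simp only [bP, Matrix.sub_apply, Matrix.smul_apply, smul_eq_mul, Matrix.cons_val',
      Matrix.cons_val_zero, Matrix.cons_val_one, Matrix.head_cons, Matrix.head_fin_const,
      Matrix.empty_val', Matrix.cons_val_fin_one, Matrix.of_apply, Fin.zero_eta, Fin.mk_one,
      Fin.isValue, mul_zero, sub_zero, mul_neg, zero_sub, abs_neg, abs_zero]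
  · -- (0,0)
    have e00 : q ^ ((i + j - 1/2) / 2) * √(qnum q (n + i + 1)) *
        (√(qnum q (n - j + 3/2)) / qnum q (2 * n + 2))
        = q ^ (n + j + 1/2) * √(1 - q ^ (2*n+2*i+2)) * √(1 - q ^ (2*n-2*j+3)) /
          (1 - q ^ (4*n+4)) := by
      rw [sqrt_qnum hq0 hq1 (n+i+1) (by linarith), sqrt_qnum hq0 hq1 (n-j+3/2) (by linarith),
        qnum_eq' hq0 hq1 (2*n+2),
        show (2:ℝ)*(n+i+1) = 2*n+2*i+2 by ring, show (2:ℝ)*(n-j+3/2) = 2*n-2*j+3 by ring,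
        show (2:ℝ)*(2*n+2) = 4*n+4 by ring]
      have hpow : q ^ ((i + j - 1/2) / 2) * q ^ ((1 - (n+i+1))/2) * q ^ ((1 - (n-j+3/2))/2)
          = q ^ (n + j + 1/2) * q ^ (1 - (2 * n + 2)) := by
        simp only [← Real.rpow_add hq0]
        congr 1
        ring
      have he := hqe (1 - (2 * n + 2))
      generalize q ^ ((i + j - 1/2) / 2) = a at hpow ⊢
      generalize q ^ ((1 - (n+i+1))/2) = b at hpow ⊢
      generalize q ^ ((1 - (n-j+3/2))/2) = d at hpow ⊢
      generalize q ^ (1 - (2 * n + 2)) = e at hpow he ⊢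
      generalize q ^ (n + j + 1/2) = f at hpow ⊢
      generalize √(1 - q ^ (2*n+2*i+2)) = A
      generalize √(1 - q ^ (2*n-2*j+3)) = B
      have hQ := hQ2.ne'
      generalize 1 - q ^ (4*n+4) = Q at hQ ⊢
      have hss : √(1 - q ^ 2) * √(1 - q ^ 2) = 1 - q ^ 2 := Real.mul_self_sqrt hc.le
      generalize √(1 - q ^ 2) = s at hss hsc ⊢
      generalize 1 - q ^ 2 = c at hss ⊢
      subst hss
      obtain rfl : f = a * b * d / e := by rw [eq_div_iff he]; exact hpow.symm
      field_simp
    rw [e00,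
      show q ^ (n + j - 1/2) * √(1 - q ^ (2*n+2*i+2)) * (q * √(1 - q ^ (2*n-2*j+3)))
        = q ^ (n+j+1/2) * √(1 - q ^ (2*n+2*i+2)) * √(1 - q ^ (2*n-2*j+3)) by
      rw [show (n+j+1/2:ℝ) = (n+j-1/2)+1 by ring, Real.rpow_add_one hq0.ne' (n+j-1/2)]; ring,
      show q ^ (n+j+1/2) * √(1 - q ^ (2*n+2*i+2)) * √(1 - q ^ (2*n-2*j+3)) / (1 - q ^ (4*n+4)) -
          q ^ (n+j+1/2) * √(1 - q ^ (2*n+2*i+2)) * √(1 - q ^ (2*n-2*j+3))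
        = q ^ (n+j+1/2) * √(1 - q ^ (2*n+2*i+2)) * √(1 - q ^ (2*n-2*j+3)) * q ^ (4*n+4) /
          (1 - q ^ (4*n+4)) by
      have hQ : 1 - q ^ (4*n+4) ≠ 0 := by positivity
      generalize q ^ (4*n+4) = P at hQ ⊢
      field_simp
      ring,
      abs_of_nonneg (div_nonneg (by positivity) hQ2.le)]
    calc q ^ (n+j+1/2) * √(1 - q ^ (2*n+2*i+2)) * √(1 - q ^ (2*n-2*j+3)) * q ^ (4*n+4) /
          (1 - q ^ (4*n+4))
        ≤ 1 * 1 * 1 * q ^ (2*n) / (1 - q ^ 2) := by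
          have hA : q ^ (n+j+1/2) ≤ 1 := hle1 _ (by linarith)
          have hB : q ^ (4*n+4) ≤ q ^ (2*n) :=
            Real.rpow_le_rpow_of_exponent_ge hq0 hq1.le (by linarith)
          gcongr <;> first | assumption | positivity
      _ = (1 - q ^ 2)⁻¹ * q ^ (2 * n) := by rw [show (2:ℝ)*n = 2*n by ring]; ring
  · -- (0,1)
    positivity
  · -- (1,0)
    have e10 : q ^ ((i + j - 1/2) / 2) * √(qnum q (n + i + 1)) *
        (q ^ (-n - 1) * √(qnum q (n + j + 1/2)) / (qnum q (2 * n + 1) * qnum q (2 * n + 2)))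
        = q ^ (2*n) * √(1 - q ^ (2*n+2*i+2)) * √(1 - q ^ (2*n+2*j+1)) * (1 - q ^ 2) /
          ((1 - q ^ (4*n+2)) * (1 - q ^ (4*n+4))) := by
      rw [sqrt_qnum hq0 hq1 (n+i+1) (by linarith), sqrt_qnum hq0 hq1 (n+j+1/2) (by linarith),
        qnum_eq' hq0 hq1 (2*n+1), qnum_eq' hq0 hq1 (2*n+2),
        show (2:ℝ)*(n+i+1) = 2*n+2*i+2 by ring, show (2:ℝ)*(n+j+1/2) = 2*n+2*j+1 by ring,
        show (2:ℝ)*(2*n+1) = 4*n+2 by ring, show (2:ℝ)*(2*n+2) = 4*n+4 by ring]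
      have hpow : q ^ ((i + j - 1/2) / 2) * q ^ ((1 - (n+i+1))/2) * q ^ (-n - 1) * q ^ ((1 - (n+j+1/2))/2)
          = q ^ (2*n) * q ^ (1 - (2*n+1)) * q ^ (1 - (2 * n + 2)) := by
        simp only [← Real.rpow_add hq0]
        congr 1
        ring
      have he := hqe (1 - (2 * n + 2))
      have he' := hqe (1 - (2 * n + 1))
      have hss : √(1 - q ^ 2) * √(1 - q ^ 2) = 1 - q ^ 2 := Real.mul_self_sqrt hc.le
      generalize q ^ ((i + j - 1/2) / 2) = a at hpow ⊢
      generalize q ^ ((1 - (n+i+1))/2) = b at hpow ⊢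
      generalize q ^ ((1 - (n+j+1/2))/2) = d at hpow ⊢
      generalize q ^ (1 - (2 * n + 2)) = e at hpow he ⊢
      generalize q ^ (1 - (2 * n + 1)) = e' at hpow he' ⊢
      generalize q ^ (-n - 1) = g at hpow ⊢
      generalize q ^ (2*n) = f at hpow ⊢
      generalize √(1 - q ^ (2*n+2*i+2)) = A
      generalize √(1 - q ^ (2*n+2*j+1)) = B
      have hQ := hQ2.ne'
      have hQ' := hQ1.ne'
      generalize 1 - q ^ (4*n+4) = Q at hQ ⊢
      generalize 1 - q ^ (4*n+2) = Q' at hQ' ⊢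
      generalize √(1 - q ^ 2) = s at hss hsc ⊢
      generalize 1 - q ^ 2 = c at hss ⊢
      subst hss
      obtain rfl : f = a * b * g * d / (e' * e) := by rw [eq_div_iff (mul_ne_zero he' he)]; rw [hpow]; ring
      field_simp
    rw [e10, abs_of_nonneg (div_nonneg (by positivity) (mul_pos hQ1 hQ2).le)]
    have hden : (1 - q ^ 2) * (1 - q ^ 2) ≤ (1 - q ^ (4*n+2)) * (1 - q ^ (4*n+4)) :=
      mul_le_mul hcQ1 hcQ2 hc.le (by linarith)
    calc q ^ (2*n) * √(1 - q ^ (2*n+2*i+2)) * √(1 - q ^ (2*n+2*j+1)) * (1 - q ^ 2) /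
          ((1 - q ^ (4*n+2)) * (1 - q ^ (4*n+4)))
        ≤ q ^ (2*n) * 1 * 1 * (1 - q ^ 2) / ((1 - q ^ 2) * (1 - q ^ 2)) := by
          gcongr <;> first | assumption | positivity
      _ = (1 - q ^ 2)⁻¹ * q ^ (2 * n) := by
          rw [inv_mul_eq_div, div_eq_div_iff (mul_pos hc hc).ne' hc.ne']
          ring
  · -- (1,1)
    have e11 : q ^ ((i + j - 1/2) / 2) * √(qnum q (n + i + 1)) *
        (q ^ (-(1:ℝ)/2) * √(qnum q (n - j + 1/2)) / qnum q (2 * n + 1))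
        = q ^ (n + j - 1/2) * √(1 - q ^ (2*n+2*i+2)) * √(1 - q ^ (2*n-2*j+1)) /
          (1 - q ^ (4*n+2)) := by
      rw [sqrt_qnum hq0 hq1 (n+i+1) (by linarith), sqrt_qnum hq0 hq1 (n-j+1/2) (by linarith),
        qnum_eq' hq0 hq1 (2*n+1),
        show (2:ℝ)*(n+i+1) = 2*n+2*i+2 by ring, show (2:ℝ)*(n-j+1/2) = 2*n-2*j+1 by ring,
        show (2:ℝ)*(2*n+1) = 4*n+2 by ring]
      have hpow : q ^ ((i + j - 1/2) / 2) * q ^ ((1 - (n+i+1))/2) * q ^ (-(1:ℝ)/2) * q ^ ((1 - (n-j+1/2))/2)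
          = q ^ (n + j - 1/2) * q ^ (1 - (2*n+1)) := by
        simp only [← Real.rpow_add hq0]
        congr 1
        ring
      have he := hqe (1 - (2 * n + 1))
      generalize q ^ ((i + j - 1/2) / 2) = a at hpow ⊢
      generalize q ^ ((1 - (n+i+1))/2) = b at hpow ⊢
      generalize q ^ ((1 - (n-j+1/2))/2) = d at hpow ⊢
      generalize q ^ (1 - (2 * n + 1)) = e at hpow he ⊢
      generalize q ^ (-(1:ℝ)/2) = g at hpow ⊢
      generalize q ^ (n + j - 1/2) = f at hpow ⊢
      generalize √(1 - q ^ (2*n+2*i+2)) = A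
      generalize √(1 - q ^ (2*n-2*j+1)) = B
      have hQ' := hQ1.ne'
      generalize 1 - q ^ (4*n+2) = Q' at hQ' ⊢
      have hss : √(1 - q ^ 2) * √(1 - q ^ 2) = 1 - q ^ 2 := Real.mul_self_sqrt hc.le
      generalize √(1 - q ^ 2) = s at hss hsc ⊢
      generalize 1 - q ^ 2 = c at hss ⊢
      subst hss
      obtain rfl : f = a * b * g * d / e := by rw [eq_div_iff he]; exact hpow.symm
      field_simp
    rw [e11,
      show q ^ (n+j-1/2) * √(1 - q ^ (2*n+2*i+2)) * √(1 - q ^ (2*n-2*j+1)) / (1 - q ^ (4*n+2)) -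
          q ^ (n+j-1/2) * √(1 - q ^ (2*n+2*i+2)) * √(1 - q ^ (2*n-2*j+1))
        = q ^ (n+j-1/2) * √(1 - q ^ (2*n+2*i+2)) * √(1 - q ^ (2*n-2*j+1)) * q ^ (4*n+2) /
          (1 - q ^ (4*n+2)) by
      have hQ : 1 - q ^ (4*n+2) ≠ 0 := by positivity
      generalize q ^ (4*n+2) = P at hQ ⊢
      field_simp
      ring,
      abs_of_nonneg (div_nonneg (by positivity) hQ1.le)]
    calc q ^ (n+j-1/2) * √(1 - q ^ (2*n+2*i+2)) * √(1 - q ^ (2*n-2*j+1)) * q ^ (4*n+2) /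
          (1 - q ^ (4*n+2))
        ≤ 1 * 1 * 1 * q ^ (2*n) / (1 - q ^ 2) := by
          have hA : q ^ (n+j-1/2) ≤ 1 := hle1 _ (by linarith)
          have hB : q ^ (4*n+2) ≤ q ^ (2*n) :=
            Real.rpow_le_rpow_of_exponent_ge hq0 hq1.le (by linarith)
          gcongr <;> first | assumption | positivity
      _ = (1 - q ^ 2)⁻¹ * q ^ (2 * n) := by rw [show (2:ℝ)*n = 2*n by ring]; ring
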